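/- Under the top agent property and limited complementarity, the outcome of the ordered match algorithm is a strongly stable outcome of the network formation game: there is no coalition of agents that can form a new set of edges among themselves (while keeping or dropping their existing edges with outside agents arbitrarily) such that all coalition members weakly prefer the new graph and at least one strictly prefers it. -/

import Mathlib

open Finset

/-- Closed neighborhood of `k` in the undirected graph with edge set `E`. -/
def nbhd {N : ℕ} (E : Finset (Fin N × Fin N)) (k : Fin N) : Finset (Fin N) :=
  insert k (Finset.univ.filter (fun m => (k, m) ∈ E ∨ (m, k) ∈ E))

/-- Strict preference of agent `k` derived from the weak preference `W` over coalitions. -/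
def SPref {N : ℕ} (W : Fin N → Finset (Fin N) → Finset (Fin N) → Prop)
    (k : Fin N) (S T : Finset (Fin N)) : Prop :=
  W k S T ∧ ¬ W k T S

/-- Each agent's weak preference over coalitions containing it is complete and transitive. -/
def TotalPreorderOn {N : ℕ}
    (W : Fin N → Finset (Fin N) → Finset (Fin N) → Prop) : Prop :=
  ∀ k : Fin N,
    (∀ S T : Finset (Fin N), k ∈ S → k ∈ T → W k S T ∨ W k T S) ∧
    (∀ S T R : Finset (Fin N), W k S T → W k T R → W k S R)

/-- Top agent property with agents labeled in decreasing order of the common preference: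
every agent strictly prefers the lower-labeled of two other agents. -/
def TopAgentLabeled {N : ℕ}
    (W : Fin N → Finset (Fin N) → Finset (Fin N) → Prop) : Prop :=
  ∀ k i j : Fin N, i ≠ k → j ≠ k → i < j →
    ∀ S : Finset (Fin N), k ∈ S → i ∉ S → j ∉ S →
      SPref W k (insert i S) (insert j S)

/-- Limited complementarity: if adding agent `i` strictly hurts `k`, then adding any nonempty
subset of agents labeled (i.e. ranked) weakly below `i` strictly hurts `k`. -/
def LimitedComp {N : ℕ}
    (W : Fin N → Finset (Fin N) → Finset (Fin N) → Prop) : Prop :=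
  ∀ (k : Fin N) (S : Finset (Fin N)) (i : Fin N), k ∈ S →
    SPref W k S (insert i S) →
    ∀ S' : Finset (Fin N), S' ⊆ Finset.univ.filter (fun j => i ≤ j) → S'.Nonempty →
      SPref W k S (S ∪ S')

open scoped Classical in
/-- One proposal step of the ordered match algorithm on edge set `E` for the pair `p = (n, l)`:
the edge is added iff both agents weakly prefer adding the other given current neighborhoods. -/
noncomputable def omStep {N : ℕ}
    (W : Fin N → Finset (Fin N) → Finset (Fin N) → Prop)
    (E : Finset (Fin N × Fin N)) (p : Fin N × Fin N) : Finset (Fin N × Fin N) :=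
  if W p.1 (insert p.2 (nbhd E p.1)) (nbhd E p.1) ∧
     W p.2 (insert p.1 (nbhd E p.2)) (nbhd E p.2)
  then insert p E else E

/-- The list of proposal pairs `(n, l)` with `n < l`, in the order visited by ordered match. -/
def pairList (N : ℕ) : List (Fin N × Fin N) :=
  (List.finRange N).flatMap (fun n =>
    ((List.finRange N).filter (fun l => n < l)).map (fun l => (n, l)))

/-- The ordered match algorithm: fold the proposal steps over all pairs in order. -/
noncomputable def orderedMatch {N : ℕ}
    (W : Fin N → Finset (Fin N) → Finset (Fin N) → Prop) : Finset (Fin N × Fin N) :=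
  (pairList N).foldl (omStep W) ∅

/-- A coalition `C` with deviating graph `E'` blocks the graph `E`: new edges are only within
the coalition, edges between non-members are untouched, all members are weakly better off and
some member is strictly better off. -/
def Blocks {N : ℕ} (W : Fin N → Finset (Fin N) → Finset (Fin N) → Prop)
    (E : Finset (Fin N × Fin N)) (C : Finset (Fin N))
    (E' : Finset (Fin N × Fin N)) : Prop :=
  (∀ e ∈ E', e ∉ E → e.1 ∈ C ∧ e.2 ∈ C) ∧
  (∀ e : Fin N × Fin N, e.1 ∉ C → e.2 ∉ C → (e ∈ E ↔ e ∈ E')) ∧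
  (∀ m ∈ C, W m (nbhd E' m) (nbhd E m)) ∧
  (∃ m ∈ C, SPref W m (nbhd E' m) (nbhd E m))

/-- Strong stability: no nonempty coalition has a blocking deviation. -/
def StronglyStable {N : ℕ} (W : Fin N → Finset (Fin N) → Finset (Fin N) → Prop)
    (E : Finset (Fin N × Fin N)) : Prop :=
  ¬ ∃ (C : Finset (Fin N)) (E' : Finset (Fin N × Fin N)), C.Nonempty ∧ Blocks W E C E'

section OMAux

variable {N : ℕ}

/-- An (unordered) edge between `a` and `b` is present in `E`. -/
abbrev edgeIn (E : Finset (Fin N × Fin N)) (a b : Fin N) : Prop :=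
  (a, b) ∈ E ∨ (b, a) ∈ E

lemma edgeIn_symm {E : Finset (Fin N × Fin N)} {a b : Fin N} (h : edgeIn E a b) :
    edgeIn E b a := h.symm

lemma mem_nbhd {E : Finset (Fin N × Fin N)} {k c : Fin N} :
    c ∈ nbhd E k ↔ c = k ∨ edgeIn E k c := by
  simp [nbhd, edgeIn]

/-- Lexicographic (strict) order on pairs, the processing order of `pairList`. -/
abbrev lexlt (p q : Fin N × Fin N) : Prop :=
  p.1 < q.1 ∨ (p.1 = q.1 ∧ p.2 < q.2)

lemma lexlt_irrefl (p : Fin N × Fin N) : ¬ lexlt p p := by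
  rintro (h | ⟨-, h⟩) <;> exact lt_irrefl _ h

lemma lexlt_asymm {p q : Fin N × Fin N} (h : lexlt p q) (h' : lexlt q p) : False := by
  rcases h with h | ⟨h1, h2⟩ <;> rcases h' with h' | ⟨h1', h2'⟩
  · exact lt_asymm h h'
  · exact absurd h (h1' ▸ lt_irrefl _)
  · exact absurd h' (h1 ▸ lt_irrefl _)
  · exact lt_asymm h2 h2'

lemma mem_pairList {p : Fin N × Fin N} : p ∈ pairList N ↔ p.1 < p.2 := by
  obtain ⟨a, b⟩ := p
  constructor
  · intro hmem
    obtain ⟨n, -, hmem2⟩ := List.mem_flatMap.mp hmem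
    obtain ⟨l, hl, heq⟩ := List.mem_map.mp hmem2
    injection heq with h1 h2
    subst h1; subst h2
    exact of_decide_eq_true (List.mem_filter.mp hl).2
  · intro h
    exact List.mem_flatMap.mpr ⟨a, List.mem_finRange a,
      List.mem_map.mpr ⟨b, List.mem_filter.mpr ⟨List.mem_finRange b, decide_eq_true h⟩, rfl⟩⟩

lemma pairwise_pairList : (pairList N).Pairwise lexlt := by
  rw [pairList, List.pairwise_flatMap]
  constructor
  · intro n _
    rw [List.pairwise_map]
    exact List.Pairwise.imp (fun h => Or.inr ⟨rfl, h⟩)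
      (List.Pairwise.sublist List.filter_sublist (List.pairwise_lt_finRange N))
  · refine List.Pairwise.imp ?_ (List.pairwise_lt_finRange N)
    intro n₁ n₂ h x hx y hy
    obtain ⟨l₁, -, rfl⟩ := List.mem_map.mp hx
    obtain ⟨l₂, -, rfl⟩ := List.mem_map.mp hy
    exact Or.inl h

variable (W : Fin N → Finset (Fin N) → Finset (Fin N) → Prop)

lemma subset_omStep (E : Finset (Fin N × Fin N)) (p : Fin N × Fin N) :
    E ⊆ omStep W E p := by
  unfold omStep; split
  · exact Finset.subset_insert _ _
  · exact Finset.Subset.refl _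

lemma omStep_subset (E : Finset (Fin N × Fin N)) (p : Fin N × Fin N) :
    omStep W E p ⊆ insert p E := by
  unfold omStep; split
  · exact Finset.Subset.refl _
  · exact Finset.subset_insert _ _

lemma subset_foldl (E : Finset (Fin N × Fin N)) (L : List (Fin N × Fin N)) :
    E ⊆ L.foldl (omStep W) E := by
  induction L generalizing E with
  | nil => exact Finset.Subset.refl _
  | cons p L ih => exact (subset_omStep W E p).trans (ih _)

lemma mem_foldl {e : Fin N × Fin N} (E : Finset (Fin N × Fin N)) (L : List (Fin N × Fin N))
    (h : e ∈ L.foldl (omStep W) E) : e ∈ E ∨ e ∈ L := by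
  induction L generalizing E with
  | nil => exact Or.inl h
  | cons p L ih =>
    rcases ih _ h with h' | h'
    · rcases Finset.mem_insert.mp (omStep_subset W E p h') with h'' | h''
      · exact Or.inr (by simp [h''])
      · exact Or.inl h''
    · exact Or.inr (List.mem_cons_of_mem _ h')

lemma fst_lt_snd {e : Fin N × Fin N} (he : e ∈ orderedMatch W) : e.1 < e.2 := by
  rcases mem_foldl W ∅ (pairList N) he with h | h
  · simp at h
  · exact mem_pairList.mp h

/-- The neighborhood of `d` truncated to partners with label `< t`. -/
def pfx (E : Finset (Fin N × Fin N)) (d : Fin N) (t : ℕ) : Finset (Fin N) :=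
  insert d ((nbhd E d).filter (fun c => (c : ℕ) < t))

lemma mem_pfx {E : Finset (Fin N × Fin N)} {d : Fin N} {t : ℕ} {c : Fin N} :
    c ∈ pfx E d t ↔ c = d ∨ (edgeIn E d c ∧ (c : ℕ) < t) := by
  simp only [pfx, Finset.mem_insert, Finset.mem_filter, mem_nbhd]
  tauto

lemma d_mem_pfx (E : Finset (Fin N × Fin N)) (d : Fin N) (t : ℕ) : d ∈ pfx E d t :=
  Finset.mem_insert_self _ _

lemma pfx_subset_nbhd (E : Finset (Fin N × Fin N)) (d : Fin N) (t : ℕ) :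
    pfx E d t ⊆ nbhd E d :=
  Finset.insert_subset_iff.mpr ⟨mem_nbhd.mpr (Or.inl rfl), Finset.filter_subset _ _⟩

lemma nbhd_eq_pfx (E : Finset (Fin N × Fin N)) (d : Fin N) : nbhd E d = pfx E d N := by
  ext c
  rw [mem_nbhd, mem_pfx]
  constructor
  · rintro (h | h)
    exacts [Or.inl h, Or.inr ⟨h, c.isLt⟩]
  · rintro (h | ⟨h, -⟩)
    exacts [Or.inl h, Or.inr h]

/-- The key characterization: the pair `(a,b)` ends up in the ordered-match output iff
both sides weakly accept, evaluated at the prefix neighborhoods at processing time. -/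
lemma decide_iff {a b : Fin N} (hab : a < b) :
    ((a, b) ∈ orderedMatch W) ↔
      (W a (insert b (pfx (orderedMatch W) a (b : ℕ))) (pfx (orderedMatch W) a (b : ℕ)) ∧
       W b (insert a (pfx (orderedMatch W) b (a : ℕ))) (pfx (orderedMatch W) b (a : ℕ))) := by
  obtain ⟨L₁, L₂, hL⟩ :=
    List.append_of_mem (mem_pairList.mpr (show ((a, b) : Fin N × Fin N).1 < (a, b).2 from hab))
  have pw := pairwise_pairList (N := N)
  rw [hL, List.pairwise_append] at pw
  obtain ⟨pw₁, pw₂, hcross⟩ := pw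
  have h₂ : ∀ q ∈ L₂, lexlt (a, b) q := (List.pairwise_cons.mp pw₂).1
  have h₁ : ∀ q ∈ L₁, lexlt q (a, b) := fun q hq => hcross q hq _ List.mem_cons_self
  set E₀ := L₁.foldl (omStep W) ∅ with hE₀def
  set E := orderedMatch W with hEdef
  have hE : E = L₂.foldl (omStep W) (omStep W E₀ (a, b)) := by
    rw [hEdef]
    unfold orderedMatch
    rw [hL, List.foldl_append, List.foldl_cons]
  have hfst : ∀ e ∈ E, e.1 < e.2 := fun e he => fst_lt_snd W he
  have hE₀mem : ∀ e, e ∈ E₀ ↔ e ∈ E ∧ lexlt e (a, b) := by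
    intro e
    constructor
    · intro he
      refine ⟨?_, ?_⟩
      · rw [hE]; exact subset_foldl W _ L₂ (subset_omStep W E₀ (a, b) he)
      · rcases mem_foldl W ∅ L₁ he with h | h
        · simp at h
        · exact h₁ e h
    · rintro ⟨heE, hlex⟩
      by_contra hne
      rw [hE] at heE
      rcases mem_foldl W _ L₂ heE with h | h
      · rcases Finset.mem_insert.mp (omStep_subset W E₀ (a, b) h) with h' | h'
        · exact lexlt_irrefl _ (h' ▸ hlex)
        · exact hne h'
      · exact lexlt_asymm hlex (h₂ e h)
  have hna : nbhd E₀ a = pfx E a (b : ℕ) := by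
    ext c
    rw [mem_nbhd, mem_pfx]
    constructor
    · rintro (rfl | hac | hca)
      · exact Or.inl rfl
      · obtain ⟨hEm, hlex⟩ := (hE₀mem _).mp hac
        refine Or.inr ⟨Or.inl hEm, ?_⟩
        rcases hlex with h' | ⟨-, h'⟩
        · exact absurd h' (lt_irrefl _)
        · exact Fin.lt_def.mp h'
      · obtain ⟨hEm, hlex⟩ := (hE₀mem _).mp hca
        have h1 : c < a := hfst _ hEm
        exact Or.inr ⟨Or.inr hEm, Fin.lt_def.mp (h1.trans hab)⟩
    · rintro (rfl | ⟨hedge, hcb⟩)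
      · exact Or.inl rfl
      · rcases hedge with h | h
        · exact Or.inr (Or.inl ((hE₀mem _).mpr ⟨h, Or.inr ⟨rfl, Fin.lt_def.mpr hcb⟩⟩))
        · have h1 : c < a := hfst _ h
          exact Or.inr (Or.inr ((hE₀mem _).mpr ⟨h, Or.inl h1⟩))
  have hnb : nbhd E₀ b = pfx E b (a : ℕ) := by
    ext c
    rw [mem_nbhd, mem_pfx]
    constructor
    · rintro (rfl | hbc | hcb)
      · exact Or.inl rfl
      · obtain ⟨hEm, hlex⟩ := (hE₀mem _).mp hbc
        rcases hlex with h' | ⟨h', -⟩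
        · exact absurd hab (not_lt.mpr h'.le)
        · exact absurd h' hab.ne'
      · obtain ⟨hEm, hlex⟩ := (hE₀mem _).mp hcb
        rcases hlex with h' | ⟨-, h''⟩
        · exact Or.inr ⟨Or.inr hEm, Fin.lt_def.mp h'⟩
        · exact absurd h'' (lt_irrefl _)
    · rintro (rfl | ⟨hedge, hca⟩)
      · exact Or.inl rfl
      · rcases hedge with h | h
        · exact absurd (hfst _ h) (lt_asymm ((Fin.lt_def.mpr hca).trans hab))
        · exact Or.inr (Or.inr ((hE₀mem _).mpr ⟨h, Or.inl (Fin.lt_def.mpr hca)⟩))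
  by_cases hcond : (W a (insert b (pfx E a (b : ℕ))) (pfx E a (b : ℕ)) ∧
      W b (insert a (pfx E b (a : ℕ))) (pfx E b (a : ℕ)))
  · have homa : omStep W E₀ (a, b) = insert (a, b) E₀ := by
      unfold omStep
      exact if_pos (show W a (insert b (nbhd E₀ a)) (nbhd E₀ a) ∧
        W b (insert a (nbhd E₀ b)) (nbhd E₀ b) by rw [hna, hnb]; exact hcond)
    constructor
    · exact fun _ => hcond
    · intro _
      rw [hE, homa]
      exact subset_foldl W _ L₂ (Finset.mem_insert_self _ _)
  · have homa : omStep W E₀ (a, b) = E₀ := by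
      unfold omStep
      exact if_neg (fun h => hcond (by rw [hna, hnb] at h; exact h))
    constructor
    · intro hmem
      exfalso
      rw [hE, homa] at hmem
      rcases mem_foldl W E₀ L₂ hmem with h | h
      · exact lexlt_irrefl _ ((hE₀mem _).mp h).2
      · exact lexlt_irrefl _ (h₂ _ h)
    · intro h
      exact absurd h hcond

/-- Every formed edge was weakly accepted at the prefix neighborhood at its formation time. -/
lemma acc {d p : Fin N} (hd : edgeIn (orderedMatch W) d p) (hne : d ≠ p) :
    W d (insert p (pfx (orderedMatch W) d (p : ℕ))) (pfx (orderedMatch W) d (p : ℕ)) := by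
  rcases lt_or_gt_of_ne hne with h | h
  · have hmem : (d, p) ∈ orderedMatch W := by
      rcases hd with h' | h'
      · exact h'
      · exact absurd (fst_lt_snd W h') (not_lt.mpr h.le)
    exact ((decide_iff W h).mp hmem).1
  · have hmem : (p, d) ∈ orderedMatch W := by
      rcases hd with h' | h'
      · exact absurd (fst_lt_snd W h') (not_lt.mpr h.le)
      · exact h'
    exact ((decide_iff W h).mp hmem).2

/-- No-regret: each agent weakly prefers any prefix of its ordered-match neighborhood
to any subset of that prefix. -/
lemma noRegret (hW : TotalPreorderOn W) (hTop : TopAgentLabeled W) (d : Fin N) :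
    ∀ t : ℕ, ∀ B : Finset (Fin N), B ⊆ pfx (orderedMatch W) d t → d ∈ B →
      W d (pfx (orderedMatch W) d t) B := by
  have wrefl : ∀ S, d ∈ S → W d S S := fun S hS => ((hW d).1 S S hS hS).elim id id
  have wtrans := (hW d).2
  intro t
  induction t with
  | zero =>
    intro B hB hdB
    have hBeq : B = pfx (orderedMatch W) d 0 := by
      refine Finset.Subset.antisymm hB ?_
      intro c hc
      rcases mem_pfx.mp hc with rfl | ⟨-, h⟩
      · exact hdB
      · omega
    rw [hBeq]
    exact wrefl _ (d_mem_pfx _ _ _)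
  | succ t ih =>
    by_cases hp : ∃ p : Fin N, edgeIn (orderedMatch W) d p ∧ p ≠ d ∧ (p : ℕ) = t
    · obtain ⟨p, hpE, hpd, hpt⟩ := hp
      have hins : pfx (orderedMatch W) d (t + 1) = insert p (pfx (orderedMatch W) d t) := by
        ext c
        simp only [mem_pfx, Finset.mem_insert]
        constructor
        · rintro (rfl | ⟨he, hlt⟩)
          · exact Or.inr (Or.inl rfl)
          · rcases Nat.lt_succ_iff_lt_or_eq.mp hlt with h | h
            · exact Or.inr (Or.inr ⟨he, h⟩)
            · exact Or.inl (Fin.ext (h.trans hpt.symm))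
        · rintro (rfl | rfl | ⟨he, hlt⟩)
          · exact Or.inr ⟨hpE, by omega⟩
          · exact Or.inl rfl
          · exact Or.inr ⟨he, by omega⟩
      have hacc : W d (pfx (orderedMatch W) d (t + 1)) (pfx (orderedMatch W) d t) := by
        have h0 := acc W hpE hpd.symm
        rw [hpt] at h0
        rwa [hins]
      intro B hB hdB
      by_cases hpB : p ∈ B
      · have hB₀ : B.erase p ⊆ pfx (orderedMatch W) d t := by
          intro c hc
          obtain ⟨hcp, hcB⟩ := Finset.mem_erase.mp hc
          have hm := hB hcB
          rw [hins] at hm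
          exact (Finset.mem_insert.mp hm).resolve_left hcp
        have hdB₀ : d ∈ B.erase p := Finset.mem_erase.mpr ⟨hpd.symm, hdB⟩
        have hBeq : insert p (B.erase p) = B := Finset.insert_erase hpB
        by_cases hQB : pfx (orderedMatch W) d t ⊆ B.erase p
        · have hBfull : B = pfx (orderedMatch W) d (t + 1) := by
            rw [← hBeq, hins, Finset.Subset.antisymm hB₀ hQB]
          rw [hBfull]
          exact wrefl _ (d_mem_pfx _ _ _)
        · obtain ⟨c, hcQ, hcB₀⟩ := Finset.not_subset.mp hQB
          have hcd : c ≠ d := fun h => hcB₀ (h ▸ hdB₀)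
          have hcp : c < p := by
            rcases mem_pfx.mp hcQ with rfl | ⟨-, h⟩
            · exact absurd rfl hcd
            · exact Fin.lt_def.mpr (by omega)
          have hsp := hTop d c p hcd hpd hcp (B.erase p) hdB₀ hcB₀ (Finset.notMem_erase p B)
          have h1 : insert c (B.erase p) ⊆ pfx (orderedMatch W) d t :=
            Finset.insert_subset_iff.mpr ⟨hcQ, hB₀⟩
          have h2 := ih (insert c (B.erase p)) h1 (Finset.mem_insert_of_mem hdB₀)
          have h3 : W d (pfx (orderedMatch W) d t) B := by
            have h4 := wtrans _ _ _ h2 hsp.1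
            rwa [hBeq] at h4
          exact wtrans _ _ _ hacc h3
      · have hBsub : B ⊆ pfx (orderedMatch W) d t := by
          intro c hc
          have hm := hB hc
          rw [hins] at hm
          exact (Finset.mem_insert.mp hm).resolve_left (fun h => hpB (h ▸ hc))
        exact wtrans _ _ _ hacc (ih B hBsub hdB)
    · have heq : pfx (orderedMatch W) d (t + 1) = pfx (orderedMatch W) d t := by
        ext c
        simp only [mem_pfx]
        constructor
        · rintro (rfl | ⟨he, hlt⟩)
          · exact Or.inl rfl
          · rcases Nat.lt_succ_iff_lt_or_eq.mp hlt with h | h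
            · exact Or.inr ⟨he, h⟩
            · by_cases hcd : c = d
              · exact Or.inl hcd
              · exact absurd ⟨c, he, hcd, h⟩ hp
        · rintro (rfl | ⟨he, hlt⟩)
          · exact Or.inl rfl
          · exact Or.inr ⟨he, by omega⟩
      rw [heq]
      exact ih

/-- Down-swap: if `d` rejected `o` when holding prefix `Q`, then `d` strictly prefers `Q` to
any set obtained from `Q` by dropping some elements and adding elements `≥ o` (at least one). -/
lemma Gdown (hW : TotalPreorderOn W) (hTop : TopAgentLabeled W) (d o : Fin N)
    (hrej : ∀ S' ⊆ Finset.univ.filter (fun j => o ≤ j), S'.Nonempty →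
      SPref W d (pfx (orderedMatch W) d (o : ℕ)) (pfx (orderedMatch W) d (o : ℕ) ∪ S')) :
    ∀ n : ℕ, ∀ B : Finset (Fin N),
      (pfx (orderedMatch W) d (o : ℕ) \ B).card ≤ n → d ∈ B →
      (∀ c ∈ B, c < o → c ∈ pfx (orderedMatch W) d (o : ℕ)) →
      (∃ c ∈ B, o ≤ c ∧ c ≠ d) →
      SPref W d (pfx (orderedMatch W) d (o : ℕ)) B := by
  set Q := pfx (orderedMatch W) d (o : ℕ) with hQdef
  have hdQ : d ∈ Q := d_mem_pfx _ _ _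
  have hnotQ : ∀ c : Fin N, o ≤ c → c ≠ d → c ∉ Q := by
    intro c hoc hcd hc
    rcases mem_pfx.mp hc with rfl | ⟨-, h⟩
    · exact hcd rfl
    · have := Fin.le_def.mp hoc
      omega
  have hout : ∀ B : Finset (Fin N), (∀ c ∈ B, c < o → c ∈ Q) →
      ∀ c ∈ B, c ∉ Q → o ≤ c ∧ c ≠ d := by
    intro B hlow c hcB hcQ
    have h1 : o ≤ c := not_lt.mp (fun h => hcQ (hlow c hcB h))
    exact ⟨h1, fun h => hcQ (h ▸ hdQ)⟩
  have hbase : ∀ B : Finset (Fin N), d ∈ B → (∀ c ∈ B, c < o → c ∈ Q) →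
      (∃ c ∈ B, o ≤ c ∧ c ≠ d) → Q ⊆ B → SPref W d Q B := by
    intro B hdB hlow hex hQB
    obtain ⟨c₀, hc₀B, hc₀o, hc₀d⟩ := hex
    have hc₀ : c₀ ∈ B \ Q := Finset.mem_sdiff.mpr ⟨hc₀B, hnotQ _ hc₀o hc₀d⟩
    have hsp := hrej (B \ Q)
      (fun c hc => Finset.mem_filter.mpr ⟨Finset.mem_univ _,
        (hout B hlow c (Finset.mem_sdiff.mp hc).1 (Finset.mem_sdiff.mp hc).2).1⟩)
      ⟨c₀, hc₀⟩
    rwa [Finset.union_sdiff_of_subset hQB] at hsp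
  intro n
  induction n with
  | zero =>
    intro B hcard hdB hlow hex
    have hQB : Q ⊆ B := Finset.sdiff_eq_empty_iff_subset.mp
      (Finset.card_eq_zero.mp (Nat.le_zero.mp hcard))
    exact hbase B hdB hlow hex hQB
  | succ n ih =>
    intro B hcard hdB hlow hex
    by_cases hQB : Q ⊆ B
    · exact hbase B hdB hlow hex hQB
    obtain ⟨c, hcQ, hcB⟩ := Finset.not_subset.mp hQB
    have hSne : (B \ Q).Nonempty := by
      obtain ⟨c₀, hc₀B, hc₀o, hc₀d⟩ := hex
      exact ⟨c₀, Finset.mem_sdiff.mpr ⟨hc₀B, hnotQ _ hc₀o hc₀d⟩⟩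
    set m := (B \ Q).min' hSne with hmdef
    have hmBQ := Finset.min'_mem (B \ Q) hSne
    have hmB : m ∈ B := (Finset.mem_sdiff.mp hmBQ).1
    have hmQ : m ∉ Q := (Finset.mem_sdiff.mp hmBQ).2
    have hom : o ≤ m := (hout B hlow m hmB hmQ).1
    have hmd : m ≠ d := (hout B hlow m hmB hmQ).2
    have hcd : c ≠ d := fun h => hcB (h ▸ hdB)
    have hco : c < o := by
      rcases mem_pfx.mp hcQ with rfl | ⟨-, h⟩
      · exact absurd rfl hcd
      · exact Fin.lt_def.mpr h
    have hcm : c < m := lt_of_lt_of_le hco hom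
    have hdB₀ : d ∈ B.erase m := Finset.mem_erase.mpr ⟨Ne.symm hmd, hdB⟩
    have hcB₀ : c ∉ B.erase m := fun h => hcB (Finset.erase_subset _ _ h)
    have hsp := hTop d c m hcd hmd hcm (B.erase m) hdB₀ hcB₀ (Finset.notMem_erase m B)
    have hBeq : insert m (B.erase m) = B := Finset.insert_erase hmB
    have hlow₁ : ∀ c' ∈ insert c (B.erase m), c' < o → c' ∈ Q := by
      intro c' hc' h'
      rcases Finset.mem_insert.mp hc' with rfl | h''
      · exact hcQ
      · exact hlow c' (Finset.erase_subset _ _ h'') h'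
    have hdB₁ : d ∈ insert c (B.erase m) := Finset.mem_insert_of_mem hdB₀
    have hcard₁ : (Q \ insert c (B.erase m)).card ≤ n := by
      have hQB₁ : Q \ insert c (B.erase m) = (Q \ B).erase c := by
        ext x
        simp only [Finset.mem_sdiff, Finset.mem_erase, Finset.mem_insert]
        constructor
        · rintro ⟨hxQ, hnot⟩
          exact ⟨fun h => hnot (Or.inl h), hxQ,
            fun hxB => hnot (Or.inr ⟨fun h => hmQ (h ▸ hxQ), hxB⟩)⟩
        · rintro ⟨hxc, hxQ, hxB⟩
          exact ⟨hxQ, fun h => h.elim hxc (fun h' => hxB h'.2)⟩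
      rw [hQB₁, Finset.card_erase_of_mem (Finset.mem_sdiff.mpr ⟨hcQ, hcB⟩)]
      omega
    have hWQB₁ : W d Q (insert c (B.erase m)) := by
      by_cases hx : ∃ c' ∈ insert c (B.erase m), o ≤ c' ∧ c' ≠ d
      · exact (ih (insert c (B.erase m)) hcard₁ hdB₁ hlow₁ hx).1
      · have hB₁Q : insert c (B.erase m) ⊆ Q := by
          intro x hx'
          by_contra hxQ
          exact hx ⟨x, hx', hout _ hlow₁ x hx' hxQ⟩
        exact noRegret W hW hTop d (o : ℕ) _ hB₁Q hdB₁
    have hsp1 : W d (insert c (B.erase m)) B := by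
      have h0 := hsp.1
      rwa [hBeq] at h0
    have hsp2 : ¬ W d B (insert c (B.erase m)) := by
      have h0 := hsp.2
      rwa [hBeq] at h0
    exact ⟨(hW d).2 _ _ _ hWQB₁ hsp1, fun hWBQ => hsp2 ((hW d).2 _ _ _ hWBQ hWQB₁)⟩

lemma keylt {c a : Fin N} (h : (c : ℕ) < (a : ℕ)) (x b : Fin N) :
    (c : ℕ) * N + (x : ℕ) < (a : ℕ) * N + (b : ℕ) := by
  calc (c : ℕ) * N + (x : ℕ) < (c : ℕ) * N + N := Nat.add_lt_add_left x.isLt _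
    _ = ((c : ℕ) + 1) * N := by ring
    _ ≤ (a : ℕ) * N := Nat.mul_le_mul_right N (by omega)
    _ ≤ (a : ℕ) * N + (b : ℕ) := Nat.le_add_right _ _

end OMAux
/-- under the top agent property and limited complementarity, the outcome of the
ordered match algorithm is a strongly stable outcome of the network formation game. -/
theorem stmt2 {N : ℕ} (W : Fin N → Finset (Fin N) → Finset (Fin N) → Prop)
    (hW : TotalPreorderOn W) (hTop : TopAgentLabeled W) (hLC : LimitedComp W) :
    StronglyStable W (orderedMatch W) := by
  rintro ⟨C, E', hCne, hNew, hOut, hWeak, m, hmC, hmS⟩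
  -- Step A: the deviation E' contains no edge outside the algorithm output.
  have stepA : ∀ k : ℕ, ∀ a b : Fin N, a < b → (a : ℕ) * N + (b : ℕ) = k →
      edgeIn E' a b → edgeIn (orderedMatch W) a b := by
    intro k
    induction k using Nat.strong_induction_on with
    | _ k IH =>
    intro a b hab hk hE'
    by_contra hnE
    have hEab : (a, b) ∉ orderedMatch W := fun h => hnE (Or.inl h)
    have hEba : (b, a) ∉ orderedMatch W := fun h => hnE (Or.inr h)
    have hCab : a ∈ C ∧ b ∈ C := by
      rcases hE' with h | h
      · exact hNew (a, b) h hEab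
      · exact ⟨(hNew (b, a) h hEba).2, (hNew (b, a) h hEba).1⟩
    have hcond : ¬ (W a (insert b (pfx (orderedMatch W) a (b : ℕ)))
          (pfx (orderedMatch W) a (b : ℕ)) ∧
        W b (insert a (pfx (orderedMatch W) b (a : ℕ)))
          (pfx (orderedMatch W) b (a : ℕ))) :=
      fun h => hEab ((decide_iff W hab).mpr h)
    -- common machinery for a decliner d with the rejected partner o
    have main : ∀ d o : Fin N, d ∈ C → o ≠ d → edgeIn E' d o →
        (∀ c : Fin N, c ≠ d → c < o → edgeIn E' d c → edgeIn (orderedMatch W) d c) →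
        ¬ W d (insert o (pfx (orderedMatch W) d (o : ℕ))) (pfx (orderedMatch W) d (o : ℕ)) →
        False := by
      intro d o hdC hod hE'do hlowIH hndW
      have hdQ : d ∈ pfx (orderedMatch W) d (o : ℕ) := d_mem_pfx _ _ _
      have hSP : SPref W d (pfx (orderedMatch W) d (o : ℕ))
          (insert o (pfx (orderedMatch W) d (o : ℕ))) :=
        ⟨((hW d).1 _ _ hdQ (Finset.mem_insert_of_mem hdQ)).resolve_right hndW, hndW⟩
      have hrej := hLC d (pfx (orderedMatch W) d (o : ℕ)) o hdQ hSP
      have hlowcond : ∀ c ∈ nbhd E' d, c < o → c ∈ pfx (orderedMatch W) d (o : ℕ) := by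
        intro c hc hco
        rcases mem_nbhd.mp hc with rfl | h
        · exact hdQ
        · by_cases hcd : c = d
          · exact hcd ▸ hdQ
          · exact mem_pfx.mpr (Or.inr ⟨hlowIH c hcd hco h, Fin.lt_def.mp hco⟩)
      have hG := Gdown W hW hTop d o hrej
        ((pfx (orderedMatch W) d (o : ℕ)) \ nbhd E' d).card (nbhd E' d) le_rfl
        (mem_nbhd.mpr (Or.inl rfl)) hlowcond
        ⟨o, mem_nbhd.mpr (Or.inr hE'do), le_refl o, hod⟩
      have hchain : W d (nbhd (orderedMatch W) d) (pfx (orderedMatch W) d (o : ℕ)) := by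
        have h1 : pfx (orderedMatch W) d (o : ℕ) ⊆ pfx (orderedMatch W) d N := by
          rw [← nbhd_eq_pfx]
          exact pfx_subset_nbhd _ _ _
        have h2 := noRegret W hW hTop d N _ h1 hdQ
        rwa [← nbhd_eq_pfx] at h2
      exact hG.2 ((hW d).2 _ _ _ (hWeak d hdC) hchain)
    rcases not_and_or.mp hcond with hna | hnb
    · -- a declined b
      refine main a b hCab.1 hab.ne' hE' ?_ hna
      intro c hca hcb hE'c
      rcases lt_or_gt_of_ne hca with h | h
      · have h1 := IH ((c : ℕ) * N + (a : ℕ)) (hk ▸ keylt (Fin.lt_def.mp h) a b) c a h rfl hE'c.symm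
        exact h1.symm
      · exact IH ((a : ℕ) * N + (c : ℕ))
          (hk ▸ Nat.add_lt_add_left (Fin.lt_def.mp hcb) ((a : ℕ) * N)) a c h rfl hE'c
    · -- b declined a
      refine main b a hCab.2 hab.ne hE'.symm ?_ hnb
      intro c hcb hca hE'c
      have h1 := IH ((c : ℕ) * N + (b : ℕ)) (hk ▸ keylt (Fin.lt_def.mp hca) b b) c b
        (hca.trans hab) rfl hE'c.symm
      exact h1.symm
  -- Step B: hence every E'-neighborhood is contained in the E-neighborhood,
  -- and no coalition member can strictly improve, contradiction.
  have hsub : nbhd E' m ⊆ nbhd (orderedMatch W) m := by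
    intro c hc
    by_cases hcm : c = m
    · subst hcm
      exact mem_nbhd.mpr (Or.inl rfl)
    · have hedge : edgeIn E' m c := (mem_nbhd.mp hc).resolve_left hcm
      rcases lt_or_gt_of_ne hcm with h | h
      · exact mem_nbhd.mpr (Or.inr
          (stepA ((c : ℕ) * N + (m : ℕ)) c m h rfl hedge.symm).symm)
      · exact mem_nbhd.mpr (Or.inr
          (stepA ((m : ℕ) * N + (c : ℕ)) m c h rfl hedge))
  have hfinal : W m (nbhd (orderedMatch W) m) (nbhd E' m) := by
    have h1 : nbhd E' m ⊆ pfx (orderedMatch W) m N := by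
      rw [← nbhd_eq_pfx]
      exact hsub
    have h2 := noRegret W hW hTop m N (nbhd E' m) h1 (mem_nbhd.mpr (Or.inl rfl))
    rwa [← nbhd_eq_pfx] at h2
  exact hmS.2 hfinal
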